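/- Let ρ be a positive definite density matrix on ℂ^{d_S} with eigenvalues p_1, …, p_{d_S}, and let |ν⟩ be a unit vector in ℂ^{d_S} ⊗ ℂ^{d_P} whose reduced state on the first factor equals ρ (i.e. Tr_P |ν⟩⟨ν| = ρ). Then ‖[log₂(ρ) ⊗ I_P, |ν⟩⟨ν|]‖₁ ≤ 4·√(∑_{i=1}^{d_S} p_i·(log₂ p_i)²). -/

import Mathlib

open scoped Kronecker ComplexOrder
open Matrix MeasureTheory

noncomputable section

/-- The positive semidefinite square root of a positive semidefinite matrix
(removed from Mathlib; restored with its former definition). -/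
def Matrix.PosSemidef.sqrt {n 𝕜 : Type*} [Fintype n] [DecidableEq n] [RCLike 𝕜]
    {A : Matrix n n 𝕜} (hA : A.PosSemidef) : Matrix n n 𝕜 :=
  hA.1.eigenvectorUnitary.1 * diagonal ((↑) ∘ (√·) ∘ hA.1.eigenvalues) *
  (star hA.1.eigenvectorUnitary : Matrix n n 𝕜)

/-- The trace norm `‖A‖₁ = Tr √(AᴴA)`. -/
def traceNorm {n : Type*} [Fintype n] [DecidableEq n] (A : Matrix n n ℂ) : ℝ :=
  ((Matrix.posSemidef_conjTranspose_mul_self A).sqrt.trace).re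

/-- The operator (spectral) norm `‖A‖_∞`. -/
def opNorm {n : Type*} [Fintype n] [DecidableEq n] (A : Matrix n n ℂ) : ℝ :=
  ‖Matrix.toEuclideanCLM (𝕜 := ℂ) A‖

/-- The partial trace over the second tensor factor. -/
def ptrace2 {m e : Type*} [Fintype e] (ρ : Matrix (m × e) (m × e) ℂ) : Matrix m m ℂ :=
  Matrix.of fun i j => ∑ k, ρ (i, k) (j, k)

/-- The binary logarithm `log₂` of a Hermitian matrix, via the spectral functional
calculus (junk value `0` on non-Hermitian input). -/
def matLog2 {n : Type*} [Fintype n] [DecidableEq n] (A : Matrix n n ℂ) : Matrix n n ℂ :=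
  if hA : A.IsHermitian then hA.cfc (Real.logb 2) else 0

/-- The commutator `[A, B] = A·B − B·A`. -/
def mcomm {n : Type*} [Fintype n] (A B : Matrix n n ℂ) : Matrix n n ℂ :=
  A * B - B * A

open scoped MatrixOrder in
lemma Matrix.PosSemidef.eq_sqrt_of_sq_eq {n : Type*} [Fintype n] [DecidableEq n]
    {A B : Matrix n n ℂ} (hB : B.PosSemidef) (hA : A.PosSemidef) (hAB : B ^ 2 = A) :
    B = hA.sqrt := by
  have h1 : hA.sqrt = cfc Real.sqrt A := by rw [hA.1.cfc_eq]; rfl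
  rw [h1, ← cfcₙ_eq_cfc, ← CFC.sqrt_eq_real_sqrt A hA.nonneg,
    CFC.sqrt_unique (by rw [← sq]; exact hAB) hB.nonneg]

section helpers

set_option linter.unusedSectionVars false

variable {n : Type*} [Fintype n] [DecidableEq n]

lemma mul_vecMulVec' (M : Matrix n n ℂ) (a b : n → ℂ) :
    M * vecMulVec a b = vecMulVec (M *ᵥ a) b := by
  ext i j
  simp [Matrix.mul_apply, vecMulVec_apply, Matrix.mulVec, dotProduct,
    Finset.sum_mul, mul_assoc]

lemma vecMulVec_mul' (a b : n → ℂ) (M : Matrix n n ℂ) :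
    vecMulVec a b * M = vecMulVec a (b ᵥ* M) := by
  ext i j
  simp [Matrix.mul_apply, vecMulVec_apply, Matrix.vecMul, dotProduct,
    Finset.mul_sum, mul_assoc]

lemma vecMulVec_mul_vecMulVec (a b c d : n → ℂ) :
    vecMulVec a b * vecMulVec c d = (b ⬝ᵥ c) • vecMulVec a d := by
  ext i j
  simp [Matrix.mul_apply, vecMulVec_apply, dotProduct, Finset.sum_mul,
    Finset.mul_sum]
  congr 1; ext k; ring

lemma trace_vecMulVec (a b : n → ℂ) : (vecMulVec a b).trace = a ⬝ᵥ b := by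
  simp [Matrix.trace, Matrix.diag, vecMulVec_apply, dotProduct]

lemma conjT_vecMulVec (a b : n → ℂ) :
    (vecMulVec a (star b))ᴴ = vecMulVec b (star a) := by
  ext i j
  simp [Matrix.conjTranspose_apply, vecMulVec_apply, mul_comm]

lemma star_dot_self (a : n → ℂ) :
    star a ⬝ᵥ a = ((∑ x, Complex.normSq (a x) : ℝ) : ℂ) := by
  push_cast
  simp [dotProduct, Complex.normSq_eq_conj_mul_self]

lemma posSemidef_vecMulVec_star (a : n → ℂ) : (vecMulVec a (star a)).PosSemidef := by
  refine Matrix.PosSemidef.of_dotProduct_mulVec_nonneg (conjT_vecMulVec a a) fun x => ?_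
  have : star x ⬝ᵥ (vecMulVec a (star a)) *ᵥ x
      = star (star a ⬝ᵥ x) * (star a ⬝ᵥ x) := by
    simp only [dotProduct, Matrix.mulVec, vecMulVec_apply, star_sum, star_mul',
      star_star, Pi.star_apply, Finset.mul_sum, Finset.sum_mul]
    rw [Finset.sum_comm]
    refine Finset.sum_congr rfl fun i _ => Finset.sum_congr rfl fun j _ => by ring
  rw [this]
  exact star_mul_self_nonneg _

lemma posSemidef_real_smul {M : Matrix n n ℂ} (hM : M.PosSemidef) {r : ℝ} (hr : 0 ≤ r) :
    ((r : ℂ) • M).PosSemidef := by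
  refine Matrix.PosSemidef.of_dotProduct_mulVec_nonneg ?_ fun x => ?_
  · unfold Matrix.IsHermitian
    rw [Matrix.conjTranspose_smul, hM.1.eq]
    norm_num
  · rw [Matrix.smul_mulVec, dotProduct_smul]
    exact smul_nonneg (by exact_mod_cast Complex.zero_le_real.mpr hr) (hM.dotProduct_mulVec_nonneg x)

lemma isHermitian_cfc' {A : Matrix n n ℂ} (hA : A.IsHermitian) (f : ℝ → ℝ) :
    (hA.cfc f).IsHermitian := by
  have hfun : star ((RCLike.ofReal : ℝ → ℂ) ∘ f ∘ hA.eigenvalues)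
      = (RCLike.ofReal : ℝ → ℂ) ∘ f ∘ hA.eigenvalues :=
    funext fun i => by simp [RCLike.star_def, RCLike.conj_ofReal]
  show _ᴴ = _
  unfold Matrix.IsHermitian.cfc
  rw [Unitary.conjStarAlgAut_apply]
  rw [Matrix.conjTranspose_mul, Matrix.conjTranspose_mul, Matrix.diagonal_conjTranspose,
    hfun, ← Matrix.star_eq_conjTranspose, ← Matrix.star_eq_conjTranspose, star_star,
    Matrix.mul_assoc]

lemma trace_cfc_sq_mul {A : Matrix n n ℂ} (hA : A.IsHermitian) (g : ℝ → ℝ) :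
    (hA.cfc g * hA.cfc g * A).trace
      = ((∑ i, hA.eigenvalues i * (g (hA.eigenvalues i)) ^ 2 : ℝ) : ℂ) := by
  set U : Matrix n n ℂ := (hA.eigenvectorUnitary : Matrix n n ℂ) with hUdef
  have hUU : star U * U = 1 := Unitary.coe_star_mul_self _
  have cancel : ∀ X : Matrix n n ℂ, star U * (U * X) = X := fun X => by
    rw [← Matrix.mul_assoc, hUU, Matrix.one_mul]
  set Dg : Matrix n n ℂ := diagonal (RCLike.ofReal ∘ g ∘ hA.eigenvalues) with hDg
  have h1 : hA.cfc g * hA.cfc g = U * (Dg * Dg) * star U := by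
    rw [Matrix.IsHermitian.cfc]
    rw [Unitary.conjStarAlgAut_apply]
    simp only [Matrix.mul_assoc, ← hUdef, ← hDg]
    rw [cancel]
  rw [h1, Matrix.mul_assoc, Matrix.mul_assoc, Matrix.trace_mul_comm, Matrix.mul_assoc]
  have h2 : star U * A * U = diagonal (RCLike.ofReal ∘ hA.eigenvalues) :=
    by
      conv_lhs => rw [hA.spectral_theorem]
      rw [Unitary.conjStarAlgAut_apply, ← hUdef, ← Matrix.mul_assoc, ← Matrix.mul_assoc, hUU,
        Matrix.one_mul, Matrix.mul_assoc, hUU, Matrix.mul_one]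
  rw [h2]
  simp only [hDg, Matrix.diagonal_mul_diagonal, Matrix.trace_diagonal]
  rw [show (RCLike.ofReal : ℝ → ℂ) = Complex.ofReal from rfl]
  push_cast
  refine Finset.sum_congr rfl fun i _ => ?_
  simp only [Pi.mul_apply, Function.comp_apply]
  ring

lemma isHermitian_kron_one {m e : Type*} [Fintype m] [Fintype e] [DecidableEq m]
    [DecidableEq e] {A : Matrix m m ℂ} (hA : A.IsHermitian) :
    (A ⊗ₖ (1 : Matrix e e ℂ)).IsHermitian := by
  ext ⟨i, k⟩ ⟨j, l⟩
  simp only [Matrix.conjTranspose_apply, kroneckerMap_apply, Matrix.one_apply, star_mul',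
    ← hA.apply i j]
  by_cases h : k = l <;> simp [h, eq_comm]

lemma trace_kron_one_mul {m e : Type*} [Fintype m] [Fintype e] [DecidableEq m]
    [DecidableEq e] (A : Matrix m m ℂ) (X : Matrix (m × e) (m × e) ℂ) :
    ((A ⊗ₖ (1 : Matrix e e ℂ)) * X).trace = (A * ptrace2 X).trace := by
  simp only [Matrix.trace, Matrix.diag, Matrix.mul_apply, Fintype.sum_prod_type,
    kroneckerMap_apply, Matrix.one_apply, mul_ite, mul_one, mul_zero, ite_mul, zero_mul,
    Finset.sum_ite_eq, Finset.mem_univ, if_true, ptrace2, Matrix.of_apply, Finset.mul_sum]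
  refine Finset.sum_congr rfl fun i _ => ?_
  rw [Finset.sum_comm]

end helpers

/-- For a positive definite density matrix `ρ` with eigenvalues `p i`
and a purification `|ν⟩` of `ρ`, the trace norm of `[log₂(ρ) ⊗ I_P, |ν⟩⟨ν|]` is at most
`4·√(∑ i, p i·(log₂ (p i))²)`. -/
theorem traceNorm_comm_log_purification_le {dS dP : ℕ}
    (ρ : Matrix (Fin dS) (Fin dS) ℂ) (hρ : ρ.PosDef) (htr : ρ.trace = 1)
    (v : Fin dS × Fin dP → ℂ)
    (hunit : ∑ x, Complex.normSq (v x) = 1)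
    (hred : ptrace2 (Matrix.of fun x y => v x * star (v y)) = ρ) :
    traceNorm (mcomm (matLog2 ρ ⊗ₖ (1 : Matrix (Fin dP) (Fin dP) ℂ))
        (Matrix.of fun x y => v x * star (v y))) ≤
      4 * Real.sqrt (∑ i, hρ.1.eigenvalues i * (Real.logb 2 (hρ.1.eigenvalues i)) ^ 2) := by
  classical
  have hPeq : (Matrix.of fun x y => v x * star (v y)) = vecMulVec v (star v) := rfl
  rw [hPeq]
  rw [hPeq] at hred
  have hLog : matLog2 ρ = (hρ.1).cfc (Real.logb 2) := dif_pos hρ.1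
  set S : ℝ := ∑ i, hρ.1.eigenvalues i * (Real.logb 2 (hρ.1.eigenvalues i)) ^ 2 with hSdef
  set A : Matrix (Fin dS) (Fin dS) ℂ := matLog2 ρ with hAdef
  set L : Matrix (Fin dS × Fin dP) (Fin dS × Fin dP) ℂ :=
    A ⊗ₖ (1 : Matrix (Fin dP) (Fin dP) ℂ) with hLdef
  set P : Matrix (Fin dS × Fin dP) (Fin dS × Fin dP) ℂ := vecMulVec v (star v) with hPdef
  have hA_herm : A.IsHermitian := by rw [hLog]; exact isHermitian_cfc' hρ.1 _
  have hL_herm : L.IsHermitian := isHermitian_kron_one hA_herm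
  set u : Fin dS × Fin dP → ℂ := L *ᵥ v with hudef
  have hstaru : star u = star v ᵥ* L := by rw [hudef, star_mulVec, hL_herm.eq]
  have hLP : L * P = vecMulVec u (star v) := by rw [hPdef, mul_vecMulVec']
  have hPL : P * L = vecMulVec v (star u) := by rw [hPdef, vecMulVec_mul', hstaru]
  set α : ℂ := star v ⬝ᵥ u with hαdef
  have huv' : star u ⬝ᵥ v = α := by
    rw [hstaru, ← dotProduct_mulVec, ← hudef]
    try exact hαdef.symm
  have hαstar : star α = α := by
    have h1 : star v ⬝ᵥ u = star (star u ⬝ᵥ v) := star_dotProduct _ _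
    calc star α = star (star (star u ⬝ᵥ v)) := by rw [hαdef, h1]
      _ = star u ⬝ᵥ v := star_star _
      _ = α := huv'
  set r : ℝ := α.re with hrdef
  have hαr : α = (r : ℂ) := by
    apply Complex.ext
    · simp [hrdef]
    · have him : (starRingEnd ℂ) α = α := hαstar
      simpa using (Complex.conj_eq_iff_im.mp him)
  set u₀ : Fin dS × Fin dP → ℂ := u - α • v with hu₀def
  have hM : mcomm L P = vecMulVec u₀ (star v) - vecMulVec v (star u₀) := by
    show L * P - P * L = _
    rw [hLP, hPL]
    ext i j
    simp only [Matrix.sub_apply, vecMulVec_apply, hu₀def, Pi.sub_apply, Pi.smul_apply,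
      smul_eq_mul, star_sub, Pi.star_apply, star_mul', star_smul]
    rw [hαstar]
    ring
  have hv1 : star v ⬝ᵥ v = 1 := by
    rw [star_dot_self, hunit]; norm_num
  have hvu : star v ⬝ᵥ u₀ = 0 := by
    have h : star v ⬝ᵥ u₀ = (star v ⬝ᵥ u) - α * (star v ⬝ᵥ v) := by
      simp [hu₀def, dotProduct_sub, dotProduct_smul]
    rw [h, hv1, ← hαdef]; ring
  have huv : star u₀ ⬝ᵥ v = 0 := by
    have h : star u₀ ⬝ᵥ v = star (star v ⬝ᵥ u₀) := star_dotProduct _ _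
    rw [h, hvu, star_zero]
  set nu₀ : ℝ := ∑ x, Complex.normSq (u₀ x) with hnu₀def
  have hβ : star u₀ ⬝ᵥ u₀ = (nu₀ : ℂ) := star_dot_self u₀
  have hMH : (mcomm L P)ᴴ = vecMulVec v (star u₀) - vecMulVec u₀ (star v) := by
    rw [hM, Matrix.conjTranspose_sub, conjT_vecMulVec, conjT_vecMulVec]
  have hMHM : (mcomm L P)ᴴ * (mcomm L P)
      = (nu₀ : ℂ) • P + vecMulVec u₀ (star u₀) := by
    rw [hMH, hM, Matrix.sub_mul, Matrix.mul_sub, Matrix.mul_sub,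
      _root_.vecMulVec_mul_vecMulVec, _root_.vecMulVec_mul_vecMulVec, _root_.vecMulVec_mul_vecMulVec,
      _root_.vecMulVec_mul_vecMulVec, hβ, hvu, huv, hv1, ← hPdef]
    simp only [zero_smul, one_smul, sub_zero, zero_sub, sub_neg_eq_add]
  set nu : ℝ := ∑ x, Complex.normSq (u x) with hnudef
  have hsu : star u ⬝ᵥ u = (nu : ℂ) := star_dot_self u
  have hS : star u ⬝ᵥ u = ((S : ℝ) : ℂ) := by
    have e1 : star u ⬝ᵥ u = star v ⬝ᵥ ((L * L) *ᵥ v) := by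
      rw [hstaru, hudef, ← dotProduct_mulVec, mulVec_mulVec]
    have e2 : star v ⬝ᵥ ((L * L) *ᵥ v) = ((L * L) * P).trace := by
      rw [hPdef, mul_vecMulVec', _root_.trace_vecMulVec, dotProduct_comm]
    have e3 : L * L = (A * A) ⊗ₖ (1 : Matrix (Fin dP) (Fin dP) ℂ) := by
      rw [hLdef, ← Matrix.mul_kronecker_mul, Matrix.one_mul]
    have e4 : (((A * A) ⊗ₖ (1 : Matrix (Fin dP) (Fin dP) ℂ)) * P).trace
        = (A * A * ρ).trace := by
      rw [trace_kron_one_mul, hred]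
    have hLog' : matLog2 ρ = (hρ.1).cfc (Real.logb 2) := dif_pos hρ.1
    rw [e1, e2, e3, e4, hSdef]
    rw [show A = (hρ.1).cfc (Real.logb 2) from hLog]
    exact trace_cfc_sq_mul hρ.1 (Real.logb 2)
  have hnuS : nu = S := by
    have := hsu.symm.trans hS
    exact_mod_cast this
  have hstaru₀ : star u₀ = star u - star α • star v := by
    rw [hu₀def, star_sub, star_smul]
  have hval : (nu₀ : ℂ) = (nu : ℂ) - (r : ℂ) ^ 2 := by
    calc (nu₀ : ℂ) = star u₀ ⬝ᵥ u₀ := hβ.symm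
      _ = star u ⬝ᵥ u₀ - star α * (star v ⬝ᵥ u₀) := by
          rw [hstaru₀, sub_dotProduct, smul_dotProduct, smul_eq_mul]
      _ = star u ⬝ᵥ u - α * (star u ⬝ᵥ v) := by
          rw [hvu, mul_zero, sub_zero, hu₀def, dotProduct_sub, dotProduct_smul,
            smul_eq_mul]
      _ = (nu : ℂ) - (r : ℂ) ^ 2 := by rw [hsu, huv', hαr]; ring
  have hnu₀nu : nu₀ = nu - r ^ 2 := by exact_mod_cast hval
  have hnu₀_nonneg : 0 ≤ nu₀ := Finset.sum_nonneg fun x _ => Complex.normSq_nonneg _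
  have hle : nu₀ ≤ S := by nlinarith [sq_nonneg r]
  by_cases h0 : nu₀ = 0
  · have hu₀0 : u₀ = 0 := by
      funext x
      have hx := (Finset.sum_eq_zero_iff_of_nonneg
        (fun i _ => Complex.normSq_nonneg (u₀ i))).mp (hnu₀def ▸ h0) x (Finset.mem_univ x)
      simpa using Complex.normSq_eq_zero.mp hx
    have hM0 : mcomm L P = 0 := by rw [hM, hu₀0]; simp [vecMulVec]
    rw [hM0]
    unfold traceNorm
    have hz : (0 : Matrix (Fin dS × Fin dP) (Fin dS × Fin dP) ℂ)
        = (Matrix.posSemidef_conjTranspose_mul_self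
            (0 : Matrix (Fin dS × Fin dP) (Fin dS × Fin dP) ℂ)).sqrt :=
      Matrix.PosSemidef.eq_sqrt_of_sq_eq (Matrix.PosSemidef.zero) _ (by simp)
    rw [← hz]
    simp only [Matrix.trace_zero, Complex.zero_re]
    positivity
  · set c : ℝ := Real.sqrt nu₀ with hcdef
    have hc_pos : 0 < c := Real.sqrt_pos.mpr (lt_of_le_of_ne hnu₀_nonneg (Ne.symm h0))
    have hc2 : c * c = nu₀ := Real.mul_self_sqrt hnu₀_nonneg
    set Q : Matrix (Fin dS × Fin dP) (Fin dS × Fin dP) ℂ :=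
      vecMulVec u₀ (star u₀) with hQdef
    set B : Matrix (Fin dS × Fin dP) (Fin dS × Fin dP) ℂ :=
      (c : ℂ) • P + ((c⁻¹ : ℝ) : ℂ) • Q with hBdef
    have hBps : B.PosSemidef :=
      (posSemidef_real_smul (posSemidef_vecMulVec_star v) hc_pos.le).add
        (posSemidef_real_smul (posSemidef_vecMulVec_star u₀)
          (inv_nonneg.mpr hc_pos.le))
    have hPP : P * P = P := by
      rw [hPdef, _root_.vecMulVec_mul_vecMulVec, hv1, one_smul]
    have hPQ : P * Q = 0 := by
      rw [hPdef, hQdef, _root_.vecMulVec_mul_vecMulVec, hvu, zero_smul]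
    have hQP : Q * P = 0 := by
      rw [hPdef, hQdef, _root_.vecMulVec_mul_vecMulVec, huv, zero_smul]
    have hQQ : Q * Q = (nu₀ : ℂ) • Q := by
      rw [hQdef, _root_.vecMulVec_mul_vecMulVec, hβ]
    have hcc : ((c : ℂ)) * (c : ℂ) = (nu₀ : ℂ) := by exact_mod_cast hc2
    have hcc' : (((c⁻¹ : ℝ) : ℂ) * ((c⁻¹ : ℝ) : ℂ)) * (nu₀ : ℂ) = 1 := by
      rw [← hc2]
      push_cast
      field_simp
    have hB2 : B ^ 2 = (mcomm L P)ᴴ * (mcomm L P) := by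
      rw [hMHM, pow_two, hBdef]
      rw [Matrix.add_mul, Matrix.mul_add, Matrix.mul_add]
      simp only [Matrix.smul_mul, Matrix.mul_smul, hPP, hPQ, hQP, hQQ, smul_smul,
        smul_zero, add_zero, zero_add]
      rw [hcc, ← mul_assoc, hcc', one_smul]
    have hsqrt : B = (Matrix.posSemidef_conjTranspose_mul_self (mcomm L P)).sqrt :=
      hBps.eq_sqrt_of_sq_eq _ hB2
    have htrB : B.trace = ((2 * c : ℝ) : ℂ) := by
      rw [hBdef, Matrix.trace_add, Matrix.trace_smul, Matrix.trace_smul, hPdef, hQdef,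
        _root_.trace_vecMulVec, _root_.trace_vecMulVec]
      have h1 : v ⬝ᵥ star v = 1 := by rw [dotProduct_comm]; exact hv1
      have h2 : u₀ ⬝ᵥ star u₀ = (nu₀ : ℂ) := by rw [dotProduct_comm]; exact hβ
      rw [h1, h2, smul_eq_mul, smul_eq_mul, mul_one, ← hc2]
      push_cast
      field_simp
      try ring
    have htn : traceNorm (mcomm L P) = 2 * c := by
      unfold traceNorm
      rw [← hsqrt, htrB]
      simp
    rw [htn]
    have hcS : c ≤ Real.sqrt S := by
      rw [hcdef]
      exact Real.sqrt_le_sqrt hle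
    nlinarith [Real.sqrt_nonneg S]
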